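/- If a vector y in a finite set Y ⊆ ℝ^n is non-dominated in Y with respect to all n coordinates, and y attains the maximum value of the last coordinate over all non-dominated elements of Y, then the truncation of y to its first n−1 coordinates is non-dominated in the set of truncations of elements of Y to their first n−1 coordinates. -/

import Mathlib

def Dominates {n : ℕ} (z y : Fin n → ℝ) : Prop :=
  (∀ k, z k ≤ y k) ∧ (∃ k, z k < y k)

/-- Truncation to the first `n` coordinates. -/
def trunc {n : ℕ} (x : Fin (n + 1) → ℝ) : Fin n → ℝ := fun i => x i.castSucc

theorem max_last_nondominated_truncation (n : ℕ) (hn : 1 ≤ n)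
    (Y : Finset (Fin (n + 1) → ℝ)) (y : Fin (n + 1) → ℝ) (hy : y ∈ Y)
    (hnd : ∀ z ∈ Y, ¬ Dominates z y)
    (hmax : ∀ z ∈ Y, (∀ w ∈ Y, ¬ Dominates w z) →
      z (Fin.last n) ≤ y (Fin.last n)) :
    ∀ z ∈ Y, ¬ Dominates (trunc z) (trunc y) := by
  intro z hz hdz
  obtain ⟨hle, k, hk⟩ := hdz
  by_cases hlast : z (Fin.last n) ≤ y (Fin.last n)
  · exact hnd z hz ⟨fun j => Fin.lastCases hlast hle j, ⟨k.castSucc, hk⟩⟩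
  · push_neg at hlast
    have hS : z ∈ Y.filter (fun w => ∀ i, w i ≤ z i) := by
      simp only [Finset.mem_filter]; exact ⟨hz, fun i => le_refl _⟩
    obtain ⟨w, hwS, hwmin⟩ : ∃ w ∈ Y.filter (fun w => ∀ i, w i ≤ z i),
        ∀ x ∈ Y.filter (fun w => ∀ i, w i ≤ z i), ¬ x < w := by
      obtain ⟨w, hw⟩ := Finset.exists_minimal (s := Y.filter (fun w => ∀ i, w i ≤ z i)) ⟨z, hS⟩
      exact ⟨w, hw.prop, fun x hx hxw => hw.not_lt hx hxw⟩
    simp only [Finset.mem_filter] at hwS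
    obtain ⟨hwY, hwz⟩ := hwS
    have hwnd : ∀ v ∈ Y, ¬ Dominates v w := by
      intro v hv hdv
      have hvw : v < w := by
        rw [Pi.lt_def]; exact ⟨hdv.1, hdv.2⟩
      exact hwmin v (Finset.mem_filter.mpr ⟨hv, fun i => le_trans (hvw.le i) (hwz i)⟩) hvw
    have hwlast := hmax w hwY hwnd
    refine hnd w hwY ⟨?_, ⟨k.castSucc, lt_of_le_of_lt (hwz k.castSucc) hk⟩⟩
    intro j
    exact Fin.lastCases hwlast (fun i => (hwz i.castSucc).trans (hle i)) j
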